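/- Let S_λ(ρ) := λρ + (1−λ)Tr[ρ]·σ be the shifted-depolarizing channel on a d-dimensional space, with 0 ≤ λ ≤ 1 and σ a fixed density operator with smallest eigenvalue s_{d−1}. For any binary discrimination game g = diag(g_0, 1−g_0) with 1/2 ≤ g_0 ≤ 1, U(S_λ, g) = max( g_0, (1 + λ + (1−λ)(1 − 2s_{d−1})(2g_0 − 1))/2 ). -/

import Mathlib

open Matrix Kronecker
open scoped ComplexOrder

noncomputable section

variable {n : Type*} [Fintype n] [DecidableEq n]

/-- A density operator: positive semidefinite with unit trace. -/
def IsDensity (ρ : Matrix n n ℂ) : Prop := ρ.PosSemidef ∧ ρ.trace = 1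

/-- A POVM: positive semidefinite effects summing to the identity. -/
def IsPOVM {m : ℕ} (π : Fin m → Matrix n n ℂ) : Prop :=
  (∀ y, (π y).PosSemidef) ∧ ∑ y, π y = 1

/-- The Choi matrix of a map on matrices. -/
def choi {p q : Type*} [Fintype p] [DecidableEq p] [Fintype q] [DecidableEq q]
    (Φ : Matrix p p ℂ → Matrix q q ℂ) : Matrix (p × q) (p × q) ℂ :=
  ∑ i, ∑ j, (Matrix.single i j (1 : ℂ)) ⊗ₖ (Φ (Matrix.single i j (1 : ℂ)))

/-- Completely positive trace preserving linear map. -/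
def IsCPTP {p q : Type*} [Fintype p] [DecidableEq p] [Fintype q] [DecidableEq q]
    (Φ : Matrix p p ℂ → Matrix q q ℂ) : Prop :=
  IsLinearMap ℂ Φ ∧ (choi Φ).PosSemidef ∧ ∀ ρ, (Φ ρ).trace = ρ.trace

/-- The average payoff of game `g`, channel `Φ`, encoding `ρ`, decoding `π`. -/
def payoff {p q : Type*} [Fintype p] [DecidableEq p] [Fintype q] [DecidableEq q]
    {nn m : ℕ} (g : Fin nn → Fin m → ℝ) (Φ : Matrix p p ℂ → Matrix q q ℂ)
    (ρ : Fin nn → Matrix p p ℂ) (π : Fin m → Matrix q q ℂ) : ℝ :=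
  ∑ x, ∑ y, ((Φ (ρ x) * π y).trace).re * g x y

/-- The communication utility of channel `Φ` for game `g`. -/
def utility {p q : Type*} [Fintype p] [DecidableEq p] [Fintype q] [DecidableEq q]
    {nn m : ℕ} (g : Fin nn → Fin m → ℝ) (Φ : Matrix p p ℂ → Matrix q q ℂ) : ℝ :=
  sSup {u : ℝ | ∃ ρ π, (∀ x, IsDensity (ρ x)) ∧ IsPOVM π ∧ u = payoff g Φ ρ π}

/-- The trace norm (sum of singular values). -/
def traceNorm (A : Matrix n n ℂ) : ℝ :=
  ∑ i, Real.sqrt ((Matrix.posSemidef_conjTranspose_mul_self A).1.eigenvalues i)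

/-- Helstrom utility of a channel for the binary discrimination game diag(g₀, 1-g₀). -/
def helstromUtility {p q : Type*} [Fintype p] [DecidableEq p] [Fintype q] [DecidableEq q]
    (Φ : Matrix p p ℂ → Matrix q q ℂ) (g₀ : ℝ) : ℝ :=
  sSup {u : ℝ | ∃ ρ₀ ρ₁, IsDensity ρ₀ ∧ IsDensity ρ₁ ∧
    u = (1 + traceNorm ((g₀ : ℂ) • Φ ρ₀ - ((1 - g₀ : ℝ) : ℂ) • Φ ρ₁)) / 2}

section Aux
open Polynomial

lemma charpoly_unitary_conj {d : ℕ} (U M : Matrix (Fin d) (Fin d) ℂ)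
    (hU : U ∈ Matrix.unitaryGroup (Fin d) ℂ) :
    (U * M * star U).charpoly = M.charpoly := by
  have hUC : (U.map (C : ℂ →+* ℂ[X])) * ((star U).map (C : ℂ →+* ℂ[X])) = 1 := by
    rw [← Matrix.map_mul, (Matrix.mem_unitaryGroup_iff).mp hU, Matrix.map_one _ (map_zero _) (map_one _)]
  have hd : (diagonal fun _ : Fin d => (X : ℂ[X])) = (X : ℂ[X]) • (1 : Matrix (Fin d) (Fin d) ℂ[X]) := by
    ext i j
    by_cases h : i = j <;> simp [h, Matrix.one_apply, Matrix.diagonal_apply]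
  have hkey : Matrix.charmatrix (U * M * star U) =
      (U.map (C : ℂ →+* ℂ[X])) * Matrix.charmatrix M * ((star U).map (C : ℂ →+* ℂ[X])) := by
    rw [Matrix.charmatrix, Matrix.charmatrix]
    rw [mul_sub, sub_mul]
    congr 1
    · have hs : (Matrix.scalar (Fin d)) (X : ℂ[X]) = (X : ℂ[X]) • (1 : Matrix (Fin d) (Fin d) ℂ[X]) := by
        rw [Matrix.scalar_apply, hd]
      rw [hs, mul_smul_comm, smul_mul_assoc, mul_one, hUC]
    · simp [RingHom.mapMatrix_apply, Matrix.map_mul]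
  have h1 : (U.map (C : ℂ →+* ℂ[X])).det * ((star U).map (C : ℂ →+* ℂ[X])).det = 1 := by
    rw [← Matrix.det_mul, hUC, Matrix.det_one]
  rw [Matrix.charpoly, Matrix.charpoly, hkey, Matrix.det_mul, Matrix.det_mul]
  rw [mul_comm, ← mul_assoc, mul_comm ((star U).map _).det, h1, one_mul]

lemma charpoly_diagonal_fin {d : ℕ} (v : Fin d → ℂ) :
    (diagonal v).charpoly = ∏ i, (X - C (v i)) := by
  rw [Matrix.charpoly_of_upperTriangular _ (Matrix.blockTriangular_diagonal v)]
  simp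

-- eigenvalue multiset for a unitary-diagonalized hermitian matrix
lemma eig_multiset_eq {d : ℕ} {M : Matrix (Fin d) (Fin d) ℂ} (hM : M.IsHermitian)
    (U : Matrix (Fin d) (Fin d) ℂ) (hU : U ∈ Matrix.unitaryGroup (Fin d) ℂ)
    (v : Fin d → ℝ) (hMeq : M = U * diagonal (fun i => (v i : ℂ)) * star U) :
    Multiset.map hM.eigenvalues Finset.univ.val = Multiset.map v Finset.univ.val := by
  have h1 : M.charpoly = ∏ i, (X - C ((v i : ℂ))) := by
    rw [hMeq, charpoly_unitary_conj _ _ hU, charpoly_diagonal_fin]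
  have h2 : M.charpoly = ∏ i, (X - C ((hM.eigenvalues i : ℂ))) := by
    conv_lhs => rw [hM.spectral_theorem, Unitary.conjStarAlgAut_apply]
    rw [charpoly_unitary_conj _ _ (hM.eigenvectorUnitary).2, charpoly_diagonal_fin]
    rfl
  have h3 : (∏ i, (X - C ((hM.eigenvalues i : ℂ)))) = ∏ i, (X - C ((v i : ℂ))) := by
    rw [← h2, h1]
  have h4 : Multiset.map (fun i => ((hM.eigenvalues i : ℂ))) Finset.univ.val
      = Multiset.map (fun i => ((v i : ℂ))) Finset.univ.val := by
    have := congrArg Polynomial.roots h3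
    rw [Finset.prod_eq_multiset_prod, Finset.prod_eq_multiset_prod,
      show (Multiset.map (fun i => X - C ((hM.eigenvalues i : ℂ))) Finset.univ.val)
          = Multiset.map (fun a => X - C a)
            (Multiset.map (fun i => ((hM.eigenvalues i : ℂ))) Finset.univ.val) from by
        rw [Multiset.map_map]; rfl,
      show (Multiset.map (fun i => X - C ((v i : ℂ))) Finset.univ.val)
          = Multiset.map (fun a => X - C a)
            (Multiset.map (fun i => ((v i : ℂ))) Finset.univ.val) from by
        rw [Multiset.map_map]; rfl,
      Polynomial.roots_multiset_prod_X_sub_C, Polynomial.roots_multiset_prod_X_sub_C] at this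
    exact this
  apply Multiset.map_injective (f := (Complex.ofReal : ℝ → ℂ)) Complex.ofReal_injective
  rw [Multiset.map_map, Multiset.map_map]
  exact h4

lemma conj_diag_conjTranspose_mul_self {d : ℕ} (U : Matrix (Fin d) (Fin d) ℂ)
    (hU : U ∈ Matrix.unitaryGroup (Fin d) ℂ) (v : Fin d → ℝ) :
    (U * diagonal (fun i => ((v i : ℝ) : ℂ)) * star U)ᴴ * (U * diagonal (fun i => ((v i : ℝ) : ℂ)) * star U)
      = U * diagonal (fun i => ((v i * v i : ℝ) : ℂ)) * star U := by
  set D : Matrix (Fin d) (Fin d) ℂ := diagonal (fun i => ((v i : ℝ) : ℂ)) with hDdef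
  have hDstar : star D = D := by
    rw [Matrix.star_eq_conjTranspose, hDdef, Matrix.diagonal_conjTranspose]
    have : (star fun i => ((v i : ℝ) : ℂ)) = fun i => ((v i : ℝ) : ℂ) := by
      funext i
      rw [Pi.star_apply, Complex.star_def, Complex.conj_ofReal]
    rw [this]
  have hA : (U * D * star U)ᴴ = U * D * star U := by
    rw [← Matrix.star_eq_conjTranspose, StarMul.star_mul, StarMul.star_mul, star_star, hDstar, Matrix.mul_assoc]
  rw [hA]
  simp only [Matrix.mul_assoc]
  rw [← Matrix.mul_assoc (star U) U, Matrix.mem_unitaryGroup_iff'.mp hU, one_mul,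
    ← Matrix.mul_assoc D D, hDdef, Matrix.diagonal_mul_diagonal]
  congr 2
  funext i
  push_cast
  ring


lemma sum_comp_of_multiset_eq {d : ℕ} {e w : Fin d → ℝ}
    (h : Multiset.map e Finset.univ.val = Multiset.map w Finset.univ.val) (f : ℝ → ℝ) :
    ∑ i, f (e i) = ∑ i, f (w i) := by
  rw [Finset.sum, Finset.sum,
    show Multiset.map (fun i => f (e i)) Finset.univ.val
        = Multiset.map f (Multiset.map e Finset.univ.val) from by rw [Multiset.map_map]; rfl,
    show Multiset.map (fun i => f (w i)) Finset.univ.val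
        = Multiset.map f (Multiset.map w Finset.univ.val) from by rw [Multiset.map_map]; rfl,
    h]

lemma psd_diag_re_nonneg {d : ℕ} {M : Matrix (Fin d) (Fin d) ℂ} (hM : M.PosSemidef) (i : Fin d) :
    0 ≤ (M i i).re := by
  have := hM.re_dotProduct_nonneg (Pi.single i 1)
  simpa [dotProduct, Matrix.mulVec, Pi.single_apply, Finset.sum_ite_eq,
    Matrix.mulVec_single] using this

lemma trace_conj_unitary {d : ℕ} (U : Matrix (Fin d) (Fin d) ℂ)
    (hU : U ∈ Matrix.unitaryGroup (Fin d) ℂ) (M : Matrix (Fin d) (Fin d) ℂ) :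
    (star U * M * U).trace = M.trace := by
  rw [Matrix.trace_mul_cycle, Matrix.mem_unitaryGroup_iff.mp hU, one_mul]

lemma sum_diag_re {d : ℕ} (M : Matrix (Fin d) (Fin d) ℂ) :
    ∑ i, (M i i).re = M.trace.re := by
  rw [Matrix.trace]
  simp [Matrix.diag, Complex.re_sum]

lemma traceNorm_conj_diag {d : ℕ} (U : Matrix (Fin d) (Fin d) ℂ)
    (hU : U ∈ Matrix.unitaryGroup (Fin d) ℂ) (v : Fin d → ℝ) :
    traceNorm (U * diagonal (fun i => ((v i : ℝ) : ℂ)) * star U) = ∑ i, |v i| := by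
  set A := U * diagonal (fun i => ((v i : ℝ) : ℂ)) * star U with hA
  have hM : Aᴴ * A = U * diagonal (fun i => ((v i * v i : ℝ) : ℂ)) * star U :=
    conj_diag_conjTranspose_mul_self U hU v
  have hmult := eig_multiset_eq (Matrix.posSemidef_conjTranspose_mul_self A).1 U hU
    (fun i => v i * v i) hM
  have h1 : traceNorm A = ∑ i, Real.sqrt (v i * v i) :=
    sum_comp_of_multiset_eq hmult Real.sqrt
  rw [h1]
  exact Finset.sum_congr rfl fun i _ => Real.sqrt_mul_self_eq_abs (v i)

lemma traceNorm_eq_sum_abs {d : ℕ} {A : Matrix (Fin d) (Fin d) ℂ} (hA : A.IsHermitian) :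
    traceNorm A = ∑ i, |hA.eigenvalues i| := by
  have h := traceNorm_conj_diag (hA.eigenvectorUnitary : Matrix (Fin d) (Fin d) ℂ)
    hA.eigenvectorUnitary.2 hA.eigenvalues
  rw [show ((hA.eigenvectorUnitary : Matrix (Fin d) (Fin d) ℂ)
      * diagonal (fun i => ((hA.eigenvalues i : ℝ) : ℂ))
      * star (hA.eigenvectorUnitary : Matrix (Fin d) (Fin d) ℂ)) = A from by
    conv_rhs => rw [hA.spectral_theorem]
    rfl] at h
  exact h

lemma smul_real_isHermitian {d : ℕ} {M : Matrix (Fin d) (Fin d) ℂ} (hM : M.IsHermitian)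
    (r : ℝ) : (((r : ℝ) : ℂ) • M).IsHermitian := by
  show _ᴴ = _
  rw [Matrix.conjTranspose_smul, hM.eq]
  congr 1
  simp [Complex.star_def, Complex.conj_ofReal]

lemma conj_facts {d : ℕ} (U : Matrix (Fin d) (Fin d) ℂ)
    (hU : U ∈ Matrix.unitaryGroup (Fin d) ℂ) {ρ : Matrix (Fin d) (Fin d) ℂ}
    (hρ : ρ.PosSemidef) (htr : ρ.trace = 1) :
    (∀ i, 0 ≤ ((star U * ρ * U) i i).re) ∧ (∑ i, ((star U * ρ * U) i i).re = 1) := by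
  have hpsd : (star U * ρ * U).PosSemidef := by
    have := hρ.conjTranspose_mul_mul_same U
    rwa [← Matrix.star_eq_conjTranspose] at this
  refine ⟨fun i => psd_diag_re_nonneg hpsd i, ?_⟩
  rw [sum_diag_re, trace_conj_unitary U hU, htr]
  simp

lemma conj_diag_posSemidef {d : ℕ} (U : Matrix (Fin d) (Fin d) ℂ) {v : Fin d → ℝ}
    (hv : ∀ i, 0 ≤ v i) :
    (U * diagonal (fun i => ((v i : ℝ) : ℂ)) * star U).PosSemidef := by
  rw [Matrix.star_eq_conjTranspose]
  exact (Matrix.posSemidef_diagonal_iff.mpr fun i =>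
    Complex.zero_le_real.mpr (hv i)).mul_mul_conjTranspose_same U

end Aux

set_option maxHeartbeats 2000000 in
/-- binary discrimination utility of the shifted-depolarizing channel. -/
theorem stmt13 {d : ℕ} (hd : 2 ≤ d) (l : ℝ) (hl0 : 0 ≤ l) (hl1 : l ≤ 1)
    (σ : Matrix (Fin d) (Fin d) ℂ) (hσ : IsDensity σ)
    (s : ℝ) (hs1 : ∀ i, s ≤ hσ.1.1.eigenvalues i) (hs2 : ∃ i, hσ.1.1.eigenvalues i = s)
    (S : Matrix (Fin d) (Fin d) ℂ → Matrix (Fin d) (Fin d) ℂ)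
    (hS : ∀ ρ, S ρ = (l : ℂ) • ρ + (((1 - l : ℝ) : ℂ) * ρ.trace) • σ)
    (g₀ : ℝ) (hg0 : 1 / 2 ≤ g₀) (hg1 : g₀ ≤ 1) :
    helstromUtility S g₀
      = max g₀ ((1 + l + (1 - l) * (1 - 2 * s) * (2 * g₀ - 1)) / 2) := by
  classical
  have hσP : σ.PosSemidef := hσ.1
  have hσtr : σ.trace = 1 := hσ.2
  -- basic real facts
  have ht0 : (0:ℝ) ≤ 2 * g₀ - 1 := by linarith
  have hs0 : 0 ≤ s := by
    obtain ⟨i, hi⟩ := hs2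
    have := hσP.eigenvalues_nonneg i
    linarith
  have hl1' : (0:ℝ) ≤ 1 - l := by linarith
  have ha0 : (0:ℝ) ≤ l * (1 - g₀) := by nlinarith
  have hb0 : (0:ℝ) ≤ (1 - l) * (2 * g₀ - 1) * s := by positivity
  set a : ℝ := l * (1 - g₀) with ha_def
  set b : ℝ := (1 - l) * (2 * g₀ - 1) * s with hb_def
  set K : ℝ := max 0 (a - b) with hK_def
  have hK0 : 0 ≤ K := le_max_left _ _
  set T : Set ℝ := {u : ℝ | ∃ ρ₀ ρ₁, IsDensity ρ₀ ∧ IsDensity ρ₁ ∧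
    u = (1 + traceNorm ((g₀ : ℂ) • S ρ₀ - ((1 - g₀ : ℝ) : ℂ) • S ρ₁)) / 2} with hT_def
  -- σ - s • 1 is positive semidefinite
  have hσs : (σ - (s : ℂ) • 1).PosSemidef := by
    set Uσ : Matrix (Fin d) (Fin d) ℂ := (hσ.1.1.eigenvectorUnitary : Matrix (Fin d) (Fin d) ℂ)
      with hUσdef
    have hUσ2 : Uσ ∈ Matrix.unitaryGroup (Fin d) ℂ := hσ.1.1.eigenvectorUnitary.2
    have key : σ - (s : ℂ) • 1
        = Uσ * diagonal (fun i => ((hσ.1.1.eigenvalues i - s : ℝ) : ℂ)) * star Uσ := by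
      conv_lhs => rw [hσ.1.1.spectral_theorem, Unitary.conjStarAlgAut_apply]
      have h1 : ((s : ℂ) • (1 : Matrix (Fin d) (Fin d) ℂ))
          = Uσ * ((s : ℂ) • 1) * star Uσ := by
        rw [Matrix.mul_smul, Matrix.mul_one, Matrix.smul_mul,
          Matrix.mem_unitaryGroup_iff.mp hUσ2]
      rw [h1, ← Matrix.sub_mul, ← Matrix.mul_sub]
      congr 2
      rw [Matrix.smul_one_eq_diagonal, Matrix.diagonal_sub]
      refine congrArg diagonal (funext fun i => ?_)
      show (hσ.1.1.eigenvalues i : ℂ) - (s : ℂ) = ((hσ.1.1.eigenvalues i - s : ℝ) : ℂ)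
      push_cast
      ring
    rw [key]
    exact conj_diag_posSemidef Uσ fun i => by linarith [hs1 i]
  -- STEP 1 : upper bound
  have ub : ∀ u ∈ T, u ≤ (1 + ((2 * g₀ - 1) + 2 * K)) / 2 := by
    rintro u ⟨ρ₀, ρ₁, h0, h1, rfl⟩
    have key : traceNorm ((g₀ : ℂ) • S ρ₀ - ((1 - g₀ : ℝ) : ℂ) • S ρ₁)
        ≤ (2 * g₀ - 1) + 2 * K := by
      set A : Matrix (Fin d) (Fin d) ℂ := (g₀ : ℂ) • S ρ₀ - ((1 - g₀ : ℝ) : ℂ) • S ρ₁ with hAdef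
      have hAeq : A = ((l * g₀ : ℝ) : ℂ) • ρ₀ - ((l * (1 - g₀) : ℝ) : ℂ) • ρ₁
          + (((1 - l) * (2 * g₀ - 1) : ℝ) : ℂ) • σ := by
        rw [hAdef, hS, hS, h0.2, h1.2]
        push_cast
        module
      have hAH : A.IsHermitian := by
        rw [hAeq]
        exact ((smul_real_isHermitian h0.1.1 _).sub (smul_real_isHermitian h1.1.1 _)).add
          (smul_real_isHermitian hσ.1.1 _)
      set U : Matrix (Fin d) (Fin d) ℂ := (hAH.eigenvectorUnitary : Matrix (Fin d) (Fin d) ℂ)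
        with hUdef
      have hUmem : U ∈ Matrix.unitaryGroup (Fin d) ℂ := hAH.eigenvectorUnitary.2
      set p : Fin d → ℝ := fun i => ((star U * ρ₀ * U) i i).re with hp_def
      set q : Fin d → ℝ := fun i => ((star U * ρ₁ * U) i i).re with hq_def
      set r : Fin d → ℝ := fun i => ((star U * σ * U) i i).re with hr_def
      obtain ⟨hp0, hpsum⟩ := conj_facts U hUmem h0.1 h0.2
      obtain ⟨hq0, hqsum⟩ := conj_facts U hUmem h1.1 h1.2
      obtain ⟨hr0, hrsum⟩ := conj_facts U hUmem hσP hσtr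
      have hq1 : ∀ i, q i ≤ 1 := by
        intro i
        rw [← hqsum]
        exact Finset.single_le_sum (fun j _ => hq0 j) (Finset.mem_univ i)
      -- the diagonal entries of the conjugated A are the eigenvalues
      have hdiag : star U * A * U = diagonal (fun i => ((hAH.eigenvalues i : ℝ) : ℂ)) := by
        have := hAH.conjStarAlgAut_star_eigenvectorUnitary
        rw [Unitary.conjStarAlgAut_apply, Unitary.coe_star, star_star] at this
        exact this
      have hentry : ∀ i, hAH.eigenvalues i
          = l * g₀ * p i - a * q i + (1 - l) * (2 * g₀ - 1) * r i := by
        have hlin : star U * A * U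
            = ((l * g₀ : ℝ) : ℂ) • (star U * ρ₀ * U) - ((l * (1 - g₀) : ℝ) : ℂ) • (star U * ρ₁ * U)
              + (((1 - l) * (2 * g₀ - 1) : ℝ) : ℂ) • (star U * σ * U) := by
          rw [hAeq]
          simp only [Matrix.mul_add, Matrix.add_mul, Matrix.mul_sub, Matrix.sub_mul,
            Matrix.mul_smul, Matrix.smul_mul]
        intro i
        have h3 : ((diagonal (fun i => ((hAH.eigenvalues i : ℝ) : ℂ))) i i).re
            = (((((l * g₀ : ℝ) : ℂ) • (star U * ρ₀ * U)
              - ((l * (1 - g₀) : ℝ) : ℂ) • (star U * ρ₁ * U)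
              + (((1 - l) * (2 * g₀ - 1) : ℝ) : ℂ) • (star U * σ * U))) i i).re := by
          rw [← hdiag, hlin]
        simp only [Matrix.diagonal_apply_eq, Complex.ofReal_re, Matrix.add_apply,
          Matrix.sub_apply, Matrix.smul_apply, smul_eq_mul, Complex.add_re, Complex.sub_re,
          Complex.re_ofReal_mul] at h3
        rw [ha_def]
        exact h3
      have hrs : ∀ i, s ≤ r i := by
        intro i
        have hpsd2 : (star U * (σ - (s : ℂ) • 1) * U).PosSemidef := by
          have := hσs.conjTranspose_mul_mul_same U
          rwa [← Matrix.star_eq_conjTranspose] at this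
        have h4 := psd_diag_re_nonneg hpsd2 i
        have hexp : star U * (σ - (s : ℂ) • 1) * U = star U * σ * U - (s : ℂ) • 1 := by
          rw [Matrix.mul_sub, Matrix.sub_mul, Matrix.mul_smul, Matrix.smul_mul,
            Matrix.mul_one, Matrix.mem_unitaryGroup_iff'.mp hUmem]
        rw [hexp] at h4
        simp only [Matrix.sub_apply, Matrix.smul_apply, Matrix.one_apply_eq, smul_eq_mul,
          mul_one, Complex.sub_re, Complex.ofReal_re] at h4
        linarith
      have hesum : ∑ i, hAH.eigenvalues i = 2 * g₀ - 1 := by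
        calc ∑ i, hAH.eigenvalues i
            = ∑ i, (l * g₀ * p i - a * q i + (1 - l) * (2 * g₀ - 1) * r i) :=
              Finset.sum_congr rfl fun i _ => hentry i
          _ = l * g₀ * ∑ i, p i - a * ∑ i, q i + (1 - l) * (2 * g₀ - 1) * ∑ i, r i := by
              rw [Finset.sum_add_distrib, Finset.sum_sub_distrib, ← Finset.mul_sum,
                ← Finset.mul_sum, ← Finset.mul_sum]
          _ = 2 * g₀ - 1 := by rw [hpsum, hqsum, hrsum, ha_def]; ring
      have htn : traceNorm A = ∑ i, |hAH.eigenvalues i| := traceNorm_eq_sum_abs hAH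
      have hmax : ∀ i, max 0 (-(hAH.eigenvalues i)) ≤ K * q i := by
        intro i
        have hle : -(hAH.eigenvalues i) ≤ a * q i - b := by
          have h := hentry i
          have h2 : (1 - l) * (2 * g₀ - 1) * s ≤ (1 - l) * (2 * g₀ - 1) * r i :=
            mul_le_mul_of_nonneg_left (hrs i) (by positivity)
          have h3 : 0 ≤ l * g₀ * p i := by
            have := hp0 i
            positivity
          rw [hb_def]
          nlinarith [h2, h3]
        rcases le_total a b with hab | hab
        · have hKz : K = 0 := max_eq_left (by linarith)
          rw [hKz, zero_mul]
          apply max_le le_rfl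
          nlinarith [hq1 i, hq0 i]
        · have hKz : K = a - b := max_eq_right (by linarith)
          rw [hKz]
          apply max_le (by nlinarith [hq0 i])
          nlinarith [hq1 i, hq0 i]
      have habs : ∀ i, |hAH.eigenvalues i|
          = hAH.eigenvalues i + 2 * max 0 (-(hAH.eigenvalues i)) := by
        intro i
        rcases le_total 0 (hAH.eigenvalues i) with h | h
        · rw [abs_of_nonneg h, max_eq_left (by linarith)]; ring
        · rw [abs_of_nonpos h, max_eq_right (by linarith)]; ring
      calc traceNorm A = ∑ i, (hAH.eigenvalues i + 2 * max 0 (-(hAH.eigenvalues i))) := by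
            rw [htn]; exact Finset.sum_congr rfl fun i _ => habs i
        _ = (∑ i, hAH.eigenvalues i) + 2 * ∑ i, max 0 (-(hAH.eigenvalues i)) := by
            rw [Finset.sum_add_distrib, Finset.mul_sum]
        _ ≤ (2 * g₀ - 1) + 2 * (K * ∑ i, q i) := by
            have h1 : ∑ i, max 0 (-(hAH.eigenvalues i)) ≤ ∑ i, K * q i :=
              Finset.sum_le_sum fun i _ => hmax i
            rw [hesum, ← Finset.mul_sum] at *
            linarith
        _ = (2 * g₀ - 1) + 2 * K := by rw [hqsum, mul_one]
    linarith
  -- STEP 2 : membership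
  have mem : (1 + ((2 * g₀ - 1) + 2 * K)) / 2 ∈ T := by
    obtain ⟨j, hj⟩ := hs2
    obtain ⟨k, hk⟩ := Fintype.exists_ne_of_one_lt_card
      (by rw [Fintype.card_fin]; omega : 1 < Fintype.card (Fin d)) j
    set Uσ : Matrix (Fin d) (Fin d) ℂ := (hσ.1.1.eigenvectorUnitary : Matrix (Fin d) (Fin d) ℂ)
      with hUσdef
    have hUσ2 : Uσ ∈ Matrix.unitaryGroup (Fin d) ℂ := hσ.1.1.eigenvectorUnitary.2
    set dens : Fin d → Matrix (Fin d) (Fin d) ℂ := fun i0 =>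
      Uσ * diagonal (fun i => (((if i = i0 then 1 else 0 : ℝ)) : ℂ)) * star Uσ with hdens_def
    have hdens : ∀ i0, IsDensity (dens i0) := by
      intro i0
      constructor
      · exact conj_diag_posSemidef Uσ fun i => by split_ifs <;> norm_num
      · rw [hdens_def]
        simp only
        rw [Matrix.trace_mul_comm, ← Matrix.mul_assoc, Matrix.mem_unitaryGroup_iff'.mp hUσ2,
          one_mul, Matrix.trace_diagonal]
        simp [apply_ite (fun (x : ℝ) => (x : ℂ)), Finset.sum_ite_eq']
    set w : Fin d → ℝ := fun i => l * g₀ * (if i = k then 1 else 0)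
      - l * (1 - g₀) * (if i = j then 1 else 0)
      + (1 - l) * (2 * g₀ - 1) * (hσ.1.1.eigenvalues i) with hw_def
    have hAopt : (g₀ : ℂ) • S (dens k) - ((1 - g₀ : ℝ) : ℂ) • S (dens j)
        = Uσ * diagonal (fun i => ((w i : ℝ) : ℂ)) * star Uσ := by
      have hcomb : (g₀ : ℂ) • S (dens k) - ((1 - g₀ : ℝ) : ℂ) • S (dens j)
          = ((l * g₀ : ℝ) : ℂ) • dens k - ((l * (1 - g₀) : ℝ) : ℂ) • dens j
            + (((1 - l) * (2 * g₀ - 1) : ℝ) : ℂ) • σ := by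
        rw [hS, hS, (hdens k).2, (hdens j).2]
        push_cast
        module
      rw [hcomb]
      conv_lhs => rw [hσ.1.1.spectral_theorem, Unitary.conjStarAlgAut_apply]
      rw [hdens_def]
      simp only
      rw [show ∀ (c₀ c₁ c₂ : ℂ) (D₀ D₁ D₂ : Matrix (Fin d) (Fin d) ℂ),
          c₀ • (Uσ * D₀ * star Uσ) - c₁ • (Uσ * D₁ * star Uσ) + c₂ • (Uσ * D₂ * star Uσ)
            = Uσ * (c₀ • D₀ - c₁ • D₁ + c₂ • D₂) * star Uσ from by
        intros c₀ c₁ c₂ D₀ D₁ D₂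
        rw [Matrix.mul_add, Matrix.mul_sub, Matrix.add_mul, Matrix.sub_mul]
        simp only [Matrix.mul_smul, Matrix.smul_mul]]
      congr 2
      ext i i'
      by_cases h : i = i'
      · subst h
        simp only [Matrix.add_apply, Matrix.sub_apply, Matrix.smul_apply,
          Matrix.diagonal_apply_eq, Function.comp_apply, smul_eq_mul, hw_def,
          show (RCLike.ofReal : ℝ → ℂ) = Complex.ofReal from rfl]
        split_ifs <;> push_cast <;> ring
      · simp [Matrix.diagonal_apply_ne _ h, h]
    have hUσ2' := hUσ2
    have htn : traceNorm ((g₀ : ℂ) • S (dens k) - ((1 - g₀ : ℝ) : ℂ) • S (dens j))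
        = ∑ i, |w i| := by
      rw [hAopt]
      exact traceNorm_conj_diag Uσ hUσ2 w
    -- eigenvalue sum of σ is 1
    have hsum_eig : ∑ i, hσ.1.1.eigenvalues i = 1 := by
      have h1 : σ.trace = ∑ i, ((hσ.1.1.eigenvalues i : ℝ) : ℂ) := by
        conv_lhs => rw [hσ.1.1.spectral_theorem, Unitary.conjStarAlgAut_apply]
        rw [Matrix.trace_mul_comm, ← Matrix.mul_assoc, Matrix.mem_unitaryGroup_iff'.mp hUσ2,
          one_mul, Matrix.trace_diagonal]
        rfl
      have h2 : ((∑ i, hσ.1.1.eigenvalues i : ℝ) : ℂ) = ((1 : ℝ) : ℂ) := by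
        push_cast
        rw [← h1, hσtr]
      exact_mod_cast h2
    have hjk : ¬ (j = k) := fun h => hk (h ▸ rfl)
    have hwj : w j = b - a := by
      simp only [hw_def, eq_self_iff_true, if_true, if_neg hjk, hj]
      rw [ha_def, hb_def]
      ring
    have hwnn : ∀ i, i ≠ j → 0 ≤ w i := by
      intro i hi
      have he0 := hσP.eigenvalues_nonneg i
      simp only [hw_def, if_neg hi]
      by_cases h : i = k
      · simp only [if_pos h]
        nlinarith [mul_nonneg hl0 (by linarith : (0:ℝ) ≤ g₀),
          mul_nonneg (mul_nonneg hl1' ht0) he0]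
      · simp only [if_neg h]
        nlinarith [mul_nonneg (mul_nonneg hl1' ht0) he0]
    have hwsum : ∑ i, w i = 2 * g₀ - 1 := by
      simp only [hw_def]
      rw [Finset.sum_add_distrib, Finset.sum_sub_distrib, ← Finset.mul_sum, ← Finset.mul_sum,
        ← Finset.mul_sum, Finset.sum_ite_eq' Finset.univ k (fun _ => (1 : ℝ)),
        Finset.sum_ite_eq' Finset.univ j (fun _ => (1 : ℝ)), hsum_eig]
      simp only [Finset.mem_univ, if_true]
      ring
    have hwabs : ∑ i, |w i| = (2 * g₀ - 1) + 2 * K := by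
      have hsplit : ∑ i, |w i| = |w j| + ∑ i ∈ Finset.univ.erase j, |w i| :=
        (Finset.add_sum_erase _ _ (Finset.mem_univ j)).symm
      have h5 : ∑ i ∈ Finset.univ.erase j, |w i| = ∑ i ∈ Finset.univ.erase j, w i :=
        Finset.sum_congr rfl fun i hi => abs_of_nonneg (hwnn i (Finset.ne_of_mem_erase hi))
      have h6 : ∑ i ∈ Finset.univ.erase j, w i = (∑ i, w i) - w j :=
        Finset.sum_erase_eq_sub (Finset.mem_univ j)
      rw [hsplit, h5, h6, hwsum, hwj]
      rcases le_total a b with hab | hab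
      · have hKz : K = 0 := max_eq_left (by linarith)
        rw [hKz, abs_of_nonneg (by linarith : (0:ℝ) ≤ b - a)]
        ring
      · have hKz : K = a - b := max_eq_right (by linarith)
        rw [hKz, abs_of_nonpos (by linarith : b - a ≤ 0)]
        ring
    exact ⟨dens k, dens j, hdens k, hdens j, by rw [htn, hwabs]⟩
  have hsup : helstromUtility S g₀ = (1 + ((2 * g₀ - 1) + 2 * K)) / 2 := by
    apply le_antisymm
    · exact csSup_le ⟨_, mem⟩ ub
    · exact le_csSup ⟨_, fun x hx => ub x hx⟩ mem
  rw [hsup]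
  -- final arithmetic
  have hiden : (1 + l + (1 - l) * (1 - 2 * s) * (2 * g₀ - 1)) / 2 - g₀
      = l * (1 - g₀) - (1 - l) * (2 * g₀ - 1) * s := by ring
  rcases le_total a b with hab | hab
  · have hKz : K = 0 := max_eq_left (by linarith)
    rw [ha_def, hb_def] at hab
    have h2 : (1 + l + (1 - l) * (1 - 2 * s) * (2 * g₀ - 1)) / 2 ≤ g₀ := by linarith
    rw [hKz, max_eq_left h2]
    ring
  · have hKz : K = a - b := max_eq_right (by linarith)
    rw [ha_def, hb_def] at hab
    have h2 : g₀ ≤ (1 + l + (1 - l) * (1 - 2 * s) * (2 * g₀ - 1)) / 2 := by linarith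
    rw [hKz, max_eq_right h2, ha_def, hb_def]
    ring

end
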